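/- For every integer d ≥ 1 and every integer k with d/2 < k ≤ d, the coefficient c_{d,k} = Σ_{i=0}^{k} (−1)^i C(d,i) S(d−i,k−i) vanishes: c_{d,k} = 0. Equivalently, in the expansion of the d-th central moment of a binomial(n,p) random variable X as a polynomial in μ = np, E(X−μ)^d = Σ_k c_{d,k} μ^k, the highest power of μ with a nonzero coefficient does not exceed d/2. -/
import Mathlib

open Finset

/-- Stirling numbers of the second kind. -/
def stirling2 : ℕ → ℕ → ℕ
  | 0, 0 => 1
  | 0, _ + 1 => 0
  | _ + 1, 0 => 0
  | n + 1, k + 1 => (k + 1) * stirling2 n (k + 1) + stirling2 n k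

/-- The signed coefficients `c_{d,k}` of the binomial central moment expansion. -/
noncomputable def momentCoeff (d k : ℕ) : ℝ :=
  ∑ i ∈ Finset.range (k + 1),
    (-1 : ℝ) ^ i * (d.choose i) * (stirling2 (d - i) (k - i))

lemma stirling2_zero_of_lt : ∀ n k, n < k → stirling2 n k = 0
  | 0, _ + 1, _ => rfl
  | n + 1, k + 1, h => by
    simp [stirling2, stirling2_zero_of_lt n (k+1) (by omega),
      stirling2_zero_of_lt n k (by omega)]

lemma stirling2_self : ∀ n, stirling2 n n = 1
  | 0 => rfl
  | n + 1 => by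
    simp [stirling2, stirling2_self n, stirling2_zero_of_lt n (n+1) (by omega)]

lemma momentCoeff_lt (d k : ℕ) (h : d < k) : momentCoeff d k = 0 := by
  unfold momentCoeff
  apply Finset.sum_eq_zero
  intro i hi
  by_cases hid : i ≤ d
  · rw [stirling2_zero_of_lt (d-i) (k-i) (by omega)]; simp
  · rw [Nat.choose_eq_zero_of_lt (by omega)]; simp

lemma momentCoeff_self (d : ℕ) (hd : 1 ≤ d) : momentCoeff d d = 0 := by
  have h : momentCoeff d d = ((∑ i ∈ range (d+1), (-1 : ℤ)^i * d.choose i : ℤ) : ℝ) := by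
    unfold momentCoeff
    push_cast
    apply Finset.sum_congr rfl
    intro i _
    rw [stirling2_self]
    push_cast; ring
  rw [h, Int.alternating_sum_range_choose]
  have : d ≠ 0 := by omega
  simp [this]

lemma momentCoeff_rec (d k : ℕ) (hkd : k ≤ d) :
    momentCoeff (d+2) (k+1)
      = (k+1) * momentCoeff (d+1) (k+1) + (d+1) * momentCoeff d k := by
  set A : ℝ := ∑ i ∈ range (k+2),
    (-1 : ℝ)^i * ((d+1).choose i) * (stirling2 (d+2-i) (k+1-i)) with hA
  set A' : ℝ := ∑ i ∈ range (k+2),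
    (-1 : ℝ)^i * ((k+1-i : ℕ) : ℝ) * ((d+1).choose i) * (stirling2 (d+1-i) (k+1-i)) with hA'
  set D : ℝ := ∑ i ∈ range (k+2),
    (-1 : ℝ)^i * (i : ℝ) * ((d+1).choose i) * (stirling2 (d+1-i) (k+1-i)) with hD
  have h1 : momentCoeff (d+2) (k+1) = A - momentCoeff (d+1) k := by
    unfold momentCoeff
    rw [hA, Finset.sum_range_succ' _ (k+1), Finset.sum_range_succ' _ (k+1)]
    have step : ∀ i ∈ range (k+1),
        (-1 : ℝ)^(i+1) * ((d+2).choose (i+1)) * (stirling2 (d+2-(i+1)) (k+1-(i+1)))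
          = (-1 : ℝ)^(i+1) * ((d+1).choose (i+1)) * (stirling2 (d+2-(i+1)) (k+1-(i+1)))
            - (-1 : ℝ)^i * ((d+1).choose i) * (stirling2 (d+1-i) (k-i)) := by
      intro i hi
      have e1 : d+2-(i+1) = d+1-i := by omega
      have e2 : k+1-(i+1) = k-i := by omega
      rw [e1, e2, Nat.choose_succ_succ (d+1) i]
      push_cast; ring
    rw [Finset.sum_congr rfl step, Finset.sum_sub_distrib]
    simp; ring
  have h2 : A = A' + momentCoeff (d+1) k := by
    unfold momentCoeff
    rw [hA, hA', Finset.sum_range_succ _ (k+1), Finset.sum_range_succ _ (k+1)]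
    have e1 : d+2-(k+1) = (d-k)+1 := by omega
    have e2 : k+1-(k+1) = 0 := by omega
    rw [e1, e2]
    have z1 : stirling2 ((d-k)+1) 0 = 0 := rfl
    rw [z1]
    have step : ∀ i ∈ range (k+1),
        (-1 : ℝ)^i * ((d+1).choose i) * (stirling2 (d+2-i) (k+1-i))
          = (-1 : ℝ)^i * ((k+1-i : ℕ) : ℝ) * ((d+1).choose i) * (stirling2 (d+1-i) (k+1-i))
            + (-1 : ℝ)^i * ((d+1).choose i) * (stirling2 (d+1-i) (k-i)) := by
      intro i hi
      simp only [Finset.mem_range] at hi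
      have e3 : d+2-i = (d+1-i)+1 := by omega
      have e4 : k+1-i = (k-i)+1 := by omega
      have e5 : stirling2 ((d+1-i)+1) ((k-i)+1)
          = ((k-i)+1) * stirling2 (d+1-i) ((k-i)+1) + stirling2 (d+1-i) (k-i) := rfl
      rw [e3, e4, e5]
      push_cast; ring
    rw [Finset.sum_congr rfl step, Finset.sum_add_distrib]
    simp
  have h3 : A' = (k+1) * momentCoeff (d+1) (k+1) - D := by
    unfold momentCoeff
    rw [hA', hD, Finset.mul_sum, ← Finset.sum_sub_distrib]
    apply Finset.sum_congr rfl
    intro i hi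
    simp only [Finset.mem_range] at hi
    rw [Nat.cast_sub (by omega : i ≤ k+1)]
    push_cast; ring
  have h4 : D = -((d+1) * momentCoeff d k) := by
    unfold momentCoeff
    rw [hD, Finset.sum_range_succ' _ (k+1), Finset.mul_sum]
    have step : ∀ i ∈ range (k+1),
        (-1 : ℝ)^(i+1) * ((i+1 : ℕ) : ℝ) * ((d+1).choose (i+1)) * (stirling2 (d+1-(i+1)) (k+1-(i+1)))
          = -((d+1 : ℝ) * ((-1 : ℝ)^i * (d.choose i) * (stirling2 (d-i) (k-i)))) := by
      intro i hi
      have e1 : d+1-(i+1) = d-i := by omega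
      have e2 : k+1-(i+1) = k-i := by omega
      have e3 : (i+1) * (d+1).choose (i+1) = (d+1) * d.choose i := by
        rw [mul_comm]; exact (Nat.add_one_mul_choose_eq d i).symm
      have e4 : (((i+1) * (d+1).choose (i+1) : ℕ) : ℝ) = ((d+1) * d.choose i : ℕ) := by
        rw [e3]
      push_cast at e4
      rw [e1, e2]
      calc (-1 : ℝ)^(i+1) * ((i+1 : ℕ) : ℝ) * ((d+1).choose (i+1)) * (stirling2 (d-i) (k-i))
          = -((-1:ℝ)^i * (((i:ℝ)+1) * ((d+1).choose (i+1))) * (stirling2 (d-i) (k-i))) := by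
            push_cast; ring
        _ = -((d+1 : ℝ) * ((-1 : ℝ)^i * (d.choose i) * (stirling2 (d-i) (k-i)))) := by
            rw [e4]; ring
    rw [Finset.sum_congr rfl step]
    simp
  rw [h1, h2, h3, h4]
  ring
/-- Vanishing of the high-order coefficients: `c_{d,k} = 0` whenever
`d ≥ 1` and `d/2 < k ≤ d`; hence the highest power of `μ = np` in the
`d`-th central binomial moment does not exceed `d/2`. -/
theorem momentCoeff_eq_zero (d k : ℕ) (hd : 1 ≤ d) (hk : d < 2 * k)
    (hkd : k ≤ d) : momentCoeff d k = 0 := by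
  induction d using Nat.strong_induction_on generalizing k with
  | _ d ih =>
    rcases hkd.eq_or_lt with heq | hlt
    · subst heq; exact momentCoeff_self k hd
    · obtain ⟨m, rfl⟩ : ∃ m, d = m + 2 := ⟨d - 2, by omega⟩
      obtain ⟨j, rfl⟩ : ∃ j, k = j + 1 := ⟨k - 1, by omega⟩
      rw [momentCoeff_rec m j (by omega)]
      rw [ih (m+1) (by omega) (j+1) (by omega) (by omega) (by omega)]
      rw [ih m (by omega) j (by omega) (by omega) (by omega)]
      ring
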